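/- arXiv:2005.05536 — 3 statements merged into one kernel-verified Lean document; each statement's English description precedes it below -/
import Mathlib

section
/- Let Λ be an artin algebra and C an ICE-closed subcategory of mod Λ. Then W(C) = {W ∈ C : for every morphism φ : C' → W with C' ∈ C, ker φ ∈ C} is a wide subcategory of mod Λ, i.e. it is closed under kernels, cokernels and extensions. -/
open CategoryTheory CategoryTheory.Limits

universe u

namespace Paper

/-- The category of (right) `Λ`-modules, realized as left modules over `Λᵐᵒᵖ`. -/
abbrev Modcat (Λ : Type u) [Ring Λ] := ModuleCat.{u} Λᵐᵒᵖ

variable {Λ : Type u} [Ring Λ]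

/-- The regular right `Λ`-module `Λ_Λ`. -/
noncomputable abbrev regular (Λ : Type u) [Ring Λ] : Modcat Λ := ModuleCat.of Λᵐᵒᵖ Λᵐᵒᵖ

/-- `M` is a direct summand of `N`. -/
def IsSummand (M N : Modcat Λ) : Prop := ∃ (i : M ⟶ N) (r : N ⟶ M), i ≫ r = 𝟙 M

/-- The `n`-th power (finite direct sum of copies) of a module. -/
noncomputable def pow (U : Modcat Λ) (n : ℕ) : Modcat Λ := ModuleCat.of Λᵐᵒᵖ (Fin n → U)

/-- `add U`: direct summands of finite direct sums of copies of `U`. -/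
def addOf (U : Modcat Λ) : Set (Modcat Λ) := { X | ∃ n : ℕ, IsSummand X (pow U n) }

/-- `Fac U`: quotients of objects of `add U`. -/
def facOf (U : Modcat Λ) : Set (Modcat Λ) :=
  { X | ∃ M ∈ addOf U, ∃ f : M ⟶ X, Epi f }

/-- `Sub U`: submodules of objects of `add U`. -/
def subOf (U : Modcat Λ) : Set (Modcat Λ) :=
  { X | ∃ M ∈ addOf U, ∃ f : X ⟶ M, Mono f }

/-- `cok U`: cokernels of maps between objects of `add U`. -/
def cokOf (U : Modcat Λ) : Set (Modcat Λ) :=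
  { X | ∃ (M N : Modcat Λ) (_ : M ∈ addOf U) (_ : N ∈ addOf U) (f : M ⟶ N),
      Nonempty (X ≅ cokernel f) }

/-- `Fac C` for a collection `C`: all quotients of objects of `C`. -/
def Fac (C : Set (Modcat Λ)) : Set (Modcat Λ) :=
  { X | ∃ M ∈ C, ∃ f : M ⟶ X, Epi f }

/-- `0 → X → Y → Z → 0` is a short exact sequence. -/
def IsSES {X Y Z : Modcat Λ} (f : X ⟶ Y) (g : Y ⟶ Z) : Prop :=
  ∃ h : f ≫ g = 0, (ShortComplex.mk f g h).ShortExact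

/-- A subcategory of `mod Λ`: a class of finitely generated modules closed under
isomorphisms, finite direct sums and direct summands. -/
structure IsSubcat (C : Set (Modcat Λ)) : Prop where
  fg : ∀ M ∈ C, Module.Finite Λᵐᵒᵖ M
  isoClosed : ∀ {M N : Modcat Λ}, (M ≅ N) → M ∈ C → N ∈ C
  sumClosed : ∀ {M N : Modcat Λ}, M ∈ C → N ∈ C → (M ⊞ N) ∈ C
  summandClosed : ∀ {M N : Modcat Λ}, IsSummand M N → N ∈ C → M ∈ C

def ClosedUnderExtensions (C : Set (Modcat Λ)) : Prop :=
  ∀ ⦃X Y Z : Modcat Λ⦄ (f : X ⟶ Y) (g : Y ⟶ Z), IsSES f g → X ∈ C → Z ∈ C → Y ∈ C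

def ClosedUnderQuotients (C : Set (Modcat Λ)) : Prop :=
  ∀ ⦃M N : Modcat Λ⦄ (f : M ⟶ N), Epi f → M ∈ C → N ∈ C

def ClosedUnderCokernels (C : Set (Modcat Λ)) : Prop :=
  ∀ ⦃M N : Modcat Λ⦄ (f : M ⟶ N), M ∈ C → N ∈ C → cokernel f ∈ C

def ClosedUnderImages (C : Set (Modcat Λ)) : Prop :=
  ∀ ⦃M N : Modcat Λ⦄ (f : M ⟶ N), M ∈ C → N ∈ C → image f ∈ C

def ClosedUnderKernels (C : Set (Modcat Λ)) : Prop :=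
  ∀ ⦃M N : Modcat Λ⦄ (f : M ⟶ N), M ∈ C → N ∈ C → kernel f ∈ C

def ClosedUnderEpiKernels (C : Set (Modcat Λ)) : Prop :=
  ∀ ⦃X Y Z : Modcat Λ⦄ (f : X ⟶ Y) (g : Y ⟶ Z), IsSES f g → Y ∈ C → Z ∈ C → X ∈ C

/-- ICE-closed: closed under images, cokernels and extensions. -/
def ICEClosed (C : Set (Modcat Λ)) : Prop :=
  ClosedUnderImages C ∧ ClosedUnderCokernels C ∧ ClosedUnderExtensions C

/-- CE-closed: closed under cokernels and extensions. -/
def CEClosed (C : Set (Modcat Λ)) : Prop :=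
  ClosedUnderCokernels C ∧ ClosedUnderExtensions C

/-- Wide: closed under kernels, cokernels and extensions. -/
def Wide (C : Set (Modcat Λ)) : Prop :=
  ClosedUnderKernels C ∧ ClosedUnderCokernels C ∧ ClosedUnderExtensions C

/-- Torsion class: closed under quotients and extensions. -/
def TorsionClass (C : Set (Modcat Λ)) : Prop :=
  ClosedUnderQuotients C ∧ ClosedUnderExtensions C

/-- Vanishing of `Ext¹_Λ(X, Y)`. -/
def ext1IsZero (X Y : Modcat Λ) : Prop :=
  IsZero (((Ext ℤ (Modcat Λ) 1).obj (Opposite.op X)).obj Y)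

/-- A rigid module: `Ext¹_Λ(U, U) = 0`. -/
def Rigid (U : Modcat Λ) : Prop := ext1IsZero U U

/-- `X` is Ext-projective in `C`: `X ∈ C` and `Ext¹_Λ(X, C') = 0` for all `C' ∈ C`. -/
def ExtProjective (C : Set (Modcat Λ)) (X : Modcat Λ) : Prop :=
  X ∈ C ∧ ∀ Y ∈ C, ext1IsZero X Y

/-- `P(C)`: the class of Ext-projective objects of `C`. -/
def extProj (C : Set (Modcat Λ)) : Set (Modcat Λ) := { X | ExtProjective C X }

/-- `C` has enough Ext-projectives. -/
def HasEnoughExtProjectives (C : Set (Modcat Λ)) : Prop :=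
  ∀ X ∈ C, ∃ (Y P : Modcat Λ) (i : Y ⟶ P) (p : P ⟶ X),
    IsSES i p ∧ ExtProjective C P ∧ Y ∈ C

/-- `P` is an Ext-progenerator of `C`. -/
def IsExtProgenerator (C : Set (Modcat Λ)) (P : Modcat Λ) : Prop :=
  addOf P = extProj C ∧ HasEnoughExtProjectives C

/-- `P` is split projective in `C`: every surjection `C' ↠ P` with `C' ∈ C` splits. -/
def SplitProjective (C : Set (Modcat Λ)) (P : Modcat Λ) : Prop :=
  P ∈ C ∧ ∀ M ∈ C, ∀ f : M ⟶ P, Epi f → ∃ s : P ⟶ M, s ≫ f = 𝟙 P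

/-- A class `P` is Fac-minimal if there is no proper subcategory `P' ⊊ P` with `P ⊆ Fac P'`. -/
def FacMinimal (P : Set (Modcat Λ)) : Prop :=
  ¬ ∃ P' : Set (Modcat Λ), IsSubcat P' ∧ P' ⊂ P ∧ P ⊆ Fac P'

/-- `W(C) = {W ∈ C | ker φ ∈ C for every φ : C' → W with C' ∈ C}`. -/
def Wcat (C : Set (Modcat Λ)) : Set (Modcat Λ) :=
  { W | W ∈ C ∧ ∀ M ∈ C, ∀ φ : M ⟶ W, kernel φ ∈ C }

/-- An indecomposable module. -/
def Indec (M : Modcat Λ) : Prop :=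
  ¬ IsZero M ∧ ∀ N K : Modcat Λ, Nonempty (M ≅ N ⊞ K) → IsZero N ∨ IsZero K

/-- `Λ` is hereditary: every submodule of a projective module is projective. -/
def Hereditary (Λ : Type u) [Ring Λ] : Prop :=
  ∀ P : Modcat Λ, Module.Projective Λᵐᵒᵖ P →
    ∀ N : Submodule Λᵐᵒᵖ P, Module.Projective Λᵐᵒᵖ N

/-- `Λ` is representation-finite: only finitely many indecomposable finitely generated
modules up to isomorphism. -/
def RepFinite (Λ : Type u) [Ring Λ] : Prop :=
  ∃ L : List (Modcat Λ), ∀ M : Modcat Λ, Module.Finite Λᵐᵒᵖ M → Indec M →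
    ∃ N ∈ L, Nonempty (M ≅ N)

/-- Covariantly finite: every finitely generated module has a left `C`-approximation. -/
def CovariantlyFinite (C : Set (Modcat Λ)) : Prop :=
  ∀ M : Modcat Λ, Module.Finite Λᵐᵒᵖ M →
    ∃ (X : Modcat Λ) (_ : X ∈ C) (f : M ⟶ X),
      ∀ Y : Modcat Λ, Y ∈ C → ∀ g : M ⟶ Y, ∃ h : X ⟶ Y, f ≫ h = g

/-- Contravariantly finite: every finitely generated module has a right `C`-approximation. -/
def ContravariantlyFinite (C : Set (Modcat Λ)) : Prop :=
  ∀ M : Modcat Λ, Module.Finite Λᵐᵒᵖ M →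
    ∃ (X : Modcat Λ) (_ : X ∈ C) (f : X ⟶ M),
      ∀ Y : Modcat Λ, Y ∈ C → ∀ g : Y ⟶ M, ∃ h : Y ⟶ X, h ≫ f = g

/-- Functorially finite: both covariantly and contravariantly finite. -/
def FunctoriallyFinite (C : Set (Modcat Λ)) : Prop :=
  CovariantlyFinite C ∧ ContravariantlyFinite C

/-- The smallest wide subcategory of `mod Λ` containing `P`. -/
def wideClosure (P : Modcat Λ) : Set (Modcat Λ) :=
  ⋂₀ { W : Set (Modcat Λ) | IsSubcat W ∧ Wide W ∧ P ∈ W }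

/-- `A` is an artin algebra: an algebra over some commutative artinian ring `R`,
finitely generated as an `R`-module. -/
def IsArtinAlgebra (A : Type u) [Ring A] : Prop :=
  ∃ (R : Type u) (cr : CommRing R), letI := cr;
    IsArtinianRing R ∧ ∃ alg : Algebra R A, letI := alg; Module.Finite R A

/-- A tilting module over a ring `Γ`: rigid, projective dimension at most `1`, and
there is a short exact sequence `0 → Γ → T⁰ → T¹ → 0` with `T⁰, T¹ ∈ add T`. -/
def IsTiltingModule {Γ : Type u} [Ring Γ] (T : Modcat Γ) : Prop :=
  Rigid T ∧
  (∃ (P₁ P₀ : Modcat Γ) (i : P₁ ⟶ P₀) (p : P₀ ⟶ T),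
    Projective P₁ ∧ Projective P₀ ∧ IsSES i p) ∧
  (∃ (T₀ T₁ : Modcat Γ) (_ : T₀ ∈ addOf T) (_ : T₁ ∈ addOf T)
    (i : regular Γ ⟶ T₀) (p : T₀ ⟶ T₁), IsSES i p)

end Paper

open Paper

section Aux

universe v w
variable {𝒜 : Type v} [Category.{w} 𝒜] [Abelian 𝒜]

/-- The kernel of the second pullback projection is isomorphic to the kernel of `f`. -/
noncomputable def kernelPullbackSndIso {X Y S : 𝒜} (f : X ⟶ S) (g : Y ⟶ S) :
    kernel (pullback.snd f g) ≅ kernel f where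
  hom := kernel.lift f (kernel.ι (pullback.snd f g) ≫ pullback.fst f g) (by
    rw [Category.assoc, pullback.condition, ← Category.assoc, kernel.condition, zero_comp])
  inv := kernel.lift (pullback.snd f g)
      (pullback.lift (kernel.ι f) 0 (by simp)) (pullback.lift_snd _ _ _)
  hom_inv_id := by
    rw [← cancel_mono (kernel.ι (pullback.snd f g))]
    apply pullback.hom_ext <;> simp [pullback.lift_fst, pullback.lift_snd]
  inv_hom_id := by
    rw [← cancel_mono (kernel.ι f)]
    simp [pullback.lift_fst]

/-- The kernel of the first pullback projection is isomorphic to the kernel of `g`. -/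
noncomputable def kernelPullbackFstIso {X Y S : 𝒜} (f : X ⟶ S) (g : Y ⟶ S) :
    kernel (pullback.fst f g) ≅ kernel g where
  hom := kernel.lift g (kernel.ι (pullback.fst f g) ≫ pullback.snd f g) (by
    rw [Category.assoc, ← pullback.condition, ← Category.assoc, kernel.condition, zero_comp])
  inv := kernel.lift (pullback.fst f g)
      (pullback.lift 0 (kernel.ι g) (by simp)) (pullback.lift_fst _ _ _)
  hom_inv_id := by
    rw [← cancel_mono (kernel.ι (pullback.fst f g))]
    apply pullback.hom_ext <;> simp [pullback.lift_fst, pullback.lift_snd]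
  inv_hom_id := by
    rw [← cancel_mono (kernel.ι g)]
    simp [pullback.lift_snd]

/-- The kernel of the restriction of `φ` to `ker (φ ≫ g)` is the kernel of `φ`. -/
noncomputable def kernelRestrictIso {A B D : 𝒜} (φ : A ⟶ B) (g : B ⟶ D) :
    kernel (kernel.ι (φ ≫ g) ≫ φ) ≅ kernel φ where
  hom := kernel.lift φ (kernel.ι (kernel.ι (φ ≫ g) ≫ φ) ≫ kernel.ι (φ ≫ g)) (by
    rw [Category.assoc, kernel.condition])
  inv := kernel.lift (kernel.ι (φ ≫ g) ≫ φ)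
      (kernel.lift (φ ≫ g) (kernel.ι φ)
        (by rw [← Category.assoc, kernel.condition, zero_comp]))
      (by rw [← Category.assoc, kernel.lift_ι, kernel.condition])
  hom_inv_id := by
    rw [← cancel_mono (kernel.ι (kernel.ι (φ ≫ g) ≫ φ)),
      ← cancel_mono (kernel.ι (φ ≫ g))]
    simp
  inv_hom_id := by
    rw [← cancel_mono (kernel.ι φ)]
    simp

/-- The sequence `0 → ker p → X → Y → 0` is exact when `p` is epi. -/
lemma isSES_kernel_ι {Λ : Type u} [Ring Λ] {X Y : Modcat Λ} (p : X ⟶ Y) [Epi p] :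
    IsSES (kernel.ι p) p :=
  ⟨kernel.condition p,
    { exact := ShortComplex.exact_of_f_is_kernel _ (kernelIsKernel p) }⟩

end Aux

theorem stmt_8 (R : Type u) [CommRing R] [IsArtinianRing R]
    (Λ : Type u) [Ring Λ] [Algebra R Λ] [Module.Finite R Λ]
    (C : Set (Modcat Λ)) (hC : IsSubcat C) (hICE : ICEClosed C) :
    Wide (Wcat C) := by
  obtain ⟨hIm, hCok, hExt⟩ := hICE
  refine ⟨?_, ?_, ?_⟩
  · -- kernels
    intro M N f hM hN
    refine ⟨hN.2 M hM.1 f, ?_⟩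
    intro C' hC' φ
    exact hC.isoClosed (kernelCompMono φ (kernel.ι f)) (hM.2 C' hC' (φ ≫ kernel.ι f))
  · -- cokernels
    intro M N f hM hN
    refine ⟨hCok f hM.1 hN.1, ?_⟩
    intro C' hC' φ
    set π := cokernel.π f with hπ
    have him : image f ∈ C := hIm f hM.1 hN.1
    have h1 : kernel π ∈ C :=
      hC.isoClosed (Abelian.imageIsoImage f).symm him
    have hker : kernel (pullback.fst φ π) ∈ C :=
      hC.isoClosed (kernelPullbackFstIso φ π).symm h1
    have hP : pullback φ π ∈ C :=
      hExt (kernel.ι (pullback.fst φ π)) (pullback.fst φ π)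
        (isSES_kernel_ι _) hker hC'
    have h2 : kernel (pullback.snd φ π) ∈ C := hN.2 _ hP (pullback.snd φ π)
    exact hC.isoClosed (kernelPullbackSndIso φ π) h2
  · -- extensions
    intro X Y Z f g hfg hX hZ
    refine ⟨hExt f g hfg hX.1 hZ.1, ?_⟩
    intro C' hC' φ
    obtain ⟨hzero, hse⟩ := hfg
    haveI := hse.mono_f
    have hK : kernel (φ ≫ g) ∈ C := hZ.2 C' hC' (φ ≫ g)
    have hk : (kernel.ι (φ ≫ g) ≫ φ) ≫ g = 0 := by
      rw [Category.assoc]; exact kernel.condition _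
    have hψ : hse.exact.lift (kernel.ι (φ ≫ g) ≫ φ) hk ≫ f
        = kernel.ι (φ ≫ g) ≫ φ := hse.exact.lift_f _ _
    have h1 : kernel (hse.exact.lift (kernel.ι (φ ≫ g) ≫ φ) hk) ∈ C :=
      hX.2 _ hK _
    have h2 : kernel (hse.exact.lift (kernel.ι (φ ≫ g) ≫ φ) hk ≫ f) ∈ C :=
      hC.isoClosed (kernelCompMono _ f).symm h1
    have h3 : kernel (kernel.ι (φ ≫ g) ≫ φ) ∈ C :=
      hC.isoClosed (kernelIsoOfEq hψ) h2
    exact hC.isoClosed (kernelRestrictIso φ g) h3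
end

section
/- Let Λ be a hereditary artin algebra and C an extension-closed subcategory of mod Λ. Then Fac C, the subcategory of all quotients of objects of C, is closed under extensions; hence Fac C is a torsion class, and it is the smallest torsion class of mod Λ containing C. -/
open CategoryTheory CategoryTheory.Limits

universe u

namespace Paper

variable {Λ : Type u} [Ring Λ]

variable {Λ : Type u} [Ring Λ]

lemma isSES_of' {X Y Z : Modcat Λ} (f : X ⟶ Y) (g : Y ⟶ Z)
    (hinj : Function.Injective f) (hsurj : Function.Surjective g)
    (hrk : LinearMap.range (show ↥X →ₗ[Λᵐᵒᵖ] ↥Y from f.hom)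
      = LinearMap.ker (show ↥Y →ₗ[Λᵐᵒᵖ] ↥Z from g.hom)) :
    IsSES f g := by
  have hz : f ≫ g = 0 := by
    ext x
    have hx : (show ↥X →ₗ[Λᵐᵒᵖ] ↥Y from f.hom) x ∈
        LinearMap.ker (show ↥Y →ₗ[Λᵐᵒᵖ] ↥Z from g.hom) := by
      rw [← hrk]; exact LinearMap.mem_range_self _ x
    simpa using hx
  refine ⟨hz, ?_⟩
  have hexact : (ShortComplex.mk f g hz).Exact :=
    (ShortComplex.moduleCat_exact_iff_range_eq_ker _).mpr hrk
  exact { exact := hexact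
          mono_f := (ModuleCat.mono_iff_injective f).mpr hinj
          epi_g := (ModuleCat.epi_iff_surjective g).mpr hsurj }

end Paper

open Paper

theorem stmt_9 (R : Type u) [CommRing R] [IsArtinianRing R]
    (Λ : Type u) [Ring Λ] [Algebra R Λ] [Module.Finite R Λ]
    (hΗ : Hereditary Λ)
    (C : Set (Modcat Λ)) (hC : IsSubcat C) (hext : ClosedUnderExtensions C) :
    ClosedUnderExtensions (Fac C) ∧ TorsionClass (Fac C) ∧ C ⊆ Fac C ∧
      (∀ T : Set (Modcat Λ), TorsionClass T → C ⊆ T → Fac C ⊆ T) := by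
  have hquot : ClosedUnderQuotients (Fac C) := by
    rintro M N f hf ⟨M₀, hM₀, q, hq⟩
    exact ⟨M₀, hM₀, q ≫ f, epi_comp q f⟩
  have hsub : C ⊆ Fac C := by
    intro M hM
    exact ⟨M, hM, 𝟙 M, inferInstance⟩
  have hfacext : ClosedUnderExtensions (Fac C) := by
    rintro X Y Z f g ⟨hfg, hse⟩ ⟨C₁, hC₁, q₁, hq₁⟩ ⟨C₂, hC₂, q₂, hq₂⟩
    -- extract concrete data from the short exact sequence
    have hfinj : Function.Injective f := by
      have : Mono (ShortComplex.mk f g hfg).f := hse.mono_f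
      exact (ModuleCat.mono_iff_injective (ShortComplex.mk f g hfg).f).mp this
    have hgsurj : Function.Surjective g := by
      have : Epi (ShortComplex.mk f g hfg).g := hse.epi_g
      exact (ModuleCat.epi_iff_surjective (ShortComplex.mk f g hfg).g).mp this
    have hrk : LinearMap.range (show ↥X →ₗ[Λᵐᵒᵖ] ↥Y from f.hom)
        = LinearMap.ker (show ↥Y →ₗ[Λᵐᵒᵖ] ↥Z from g.hom) :=
      (ShortComplex.moduleCat_exact_iff_range_eq_ker _).mp hse.exact
    have hq₁s : Function.Surjective q₁ := (ModuleCat.epi_iff_surjective q₁).mp hq₁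
    have hq₂s : Function.Surjective q₂ := (ModuleCat.epi_iff_surjective q₂).mp hq₂
    -- finite free cover of C₂
    haveI : Module.Finite Λᵐᵒᵖ ↥C₂ := hC.fg C₂ hC₂
    obtain ⟨n, φ, hφ⟩ := Module.Finite.exists_fin' Λᵐᵒᵖ ↥C₂
    set S : Submodule Λᵐᵒᵖ (Fin n → Λᵐᵒᵖ) := LinearMap.ker φ with hS_def
    haveI hSproj : Module.Projective Λᵐᵒᵖ ↥S :=
      hΗ (ModuleCat.of Λᵐᵒᵖ (Fin n → Λᵐᵒᵖ))
        (inferInstance : Module.Projective Λᵐᵒᵖ (Fin n → Λᵐᵒᵖ)) S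
    -- lift q₂ ∘ φ through g
    obtain ⟨hY, hhY⟩ := Module.projective_lifting_property
      (show ↥Y →ₗ[Λᵐᵒᵖ] ↥Z from g.hom)
      ((show ↥C₂ →ₗ[Λᵐᵒᵖ] ↥Z from q₂.hom).comp φ) hgsurj
    have hhY' : ∀ x : Fin n → Λᵐᵒᵖ, g (hY x) = q₂ (φ x) := fun x =>
      congrFun (congrArg DFunLike.coe hhY) x
    -- the restriction of hY to S lands in the image of f
    have hmem : ∀ a : ↥S, hY (a : Fin n → Λᵐᵒᵖ) ∈
        LinearMap.range (show ↥X →ₗ[Λᵐᵒᵖ] ↥Y from f.hom) := by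
      intro a
      rw [hrk]
      have ha : φ (a : Fin n → Λᵐᵒᵖ) = 0 := a.2
      simp only [LinearMap.mem_ker]
      rw [show (show ↥Y →ₗ[Λᵐᵒᵖ] ↥Z from g.hom) (hY ↑a) = g (hY ↑a) from rfl,
        hhY' (a : Fin n → Λᵐᵒᵖ), ha, map_zero]
    let u : ↥S →ₗ[Λᵐᵒᵖ] ↥Y := hY.comp S.subtype
    let v : ↥S →ₗ[Λᵐᵒᵖ] ↥X :=
      (LinearEquiv.ofInjective (show ↥X →ₗ[Λᵐᵒᵖ] ↥Y from f.hom) hfinj).symm.toLinearMap.comp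
        (u.codRestrict (LinearMap.range (show ↥X →ₗ[Λᵐᵒᵖ] ↥Y from f.hom)) hmem)
    have hv : ∀ a : ↥S, f (v a) = hY (a : Fin n → Λᵐᵒᵖ) := by
      intro a
      have := (LinearEquiv.ofInjective (show ↥X →ₗ[Λᵐᵒᵖ] ↥Y from f.hom) hfinj).apply_symm_apply
        (u.codRestrict (LinearMap.range (show ↥X →ₗ[Λᵐᵒᵖ] ↥Y from f.hom)) hmem a)
      have h2 := congrArg Subtype.val this
      rw [LinearEquiv.ofInjective_apply] at h2
      exact h2
    -- lift v through q₁
    obtain ⟨s, hs⟩ := Module.projective_lifting_property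
      (show ↥C₁ →ₗ[Λᵐᵒᵖ] ↥X from q₁.hom) v hq₁s
    have hs' : ∀ a : ↥S, q₁ (s a) = v a := fun a =>
      congrFun (congrArg DFunLike.coe hs) a
    -- the pushout E
    set T : Submodule Λᵐᵒᵖ (↥C₁ × (Fin n → Λᵐᵒᵖ)) :=
      LinearMap.range (LinearMap.prod s (-S.subtype)) with hT_def
    set E : Modcat Λ := ModuleCat.of Λᵐᵒᵖ ((↥C₁ × (Fin n → Λᵐᵒᵖ)) ⧸ T) with hE_def
    let e₁ : C₁ ⟶ E := ModuleCat.ofHom (T.mkQ.comp (LinearMap.inl Λᵐᵒᵖ ↥C₁ (Fin n → Λᵐᵒᵖ)))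
    have hφT : T ≤ LinearMap.ker (φ.comp (LinearMap.snd Λᵐᵒᵖ ↥C₁ (Fin n → Λᵐᵒᵖ))) := by
      rintro _ ⟨a, rfl⟩
      simp only [LinearMap.mem_ker, LinearMap.comp_apply, LinearMap.snd_apply,
        LinearMap.prod_apply, Pi.prod, Function.prod_apply, LinearMap.neg_apply, Submodule.coe_subtype, map_neg]
      rw [show φ (a : Fin n → Λᵐᵒᵖ) = 0 from a.2]
      simp
    let e₂ : E ⟶ C₂ := ModuleCat.ofHom (T.liftQ (φ.comp (LinearMap.snd Λᵐᵒᵖ ↥C₁ (Fin n → Λᵐᵒᵖ))) hφT)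
    -- E is an extension of C₂ by C₁
    have he₁inj : Function.Injective e₁ := by
      intro c c' hcc
      have hcc' : (Submodule.Quotient.mk ((c, 0) : ↥C₁ × (Fin n → Λᵐᵒᵖ)) :
          (↥C₁ × (Fin n → Λᵐᵒᵖ)) ⧸ T) = Submodule.Quotient.mk (c', 0) := hcc
      have : ((c, 0) : ↥C₁ × (Fin n → Λᵐᵒᵖ)) - (c', 0) ∈ T :=
        (Submodule.Quotient.eq T).mp hcc'
      obtain ⟨a, ha⟩ := this
      have ha2 : -(a : Fin n → Λᵐᵒᵖ) = 0 := by
        simpa [LinearMap.prod_apply, Pi.prod] using congrArg Prod.snd ha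
      have ha0 : a = 0 := by
        ext1
        simpa using ha2
      have ha1 : s a = c - c' := by
        simpa [LinearMap.prod_apply, Pi.prod] using congrArg Prod.fst ha
      rw [ha0, map_zero] at ha1
      exact sub_eq_zero.mp ha1.symm
    have he₂surj : Function.Surjective e₂ := by
      intro c
      obtain ⟨x, hx⟩ := hφ c
      exact ⟨T.mkQ (0, x), by exact hx⟩
    have hrk' : LinearMap.range (show ↥C₁ →ₗ[Λᵐᵒᵖ] ↥E from e₁.hom)
        = LinearMap.ker (show ↥E →ₗ[Λᵐᵒᵖ] ↥C₂ from e₂.hom) := by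
      apply le_antisymm
      · rintro _ ⟨c, rfl⟩
        exact LinearMap.mem_ker.mpr (map_zero φ)
      · rintro z hz
        obtain ⟨⟨c, x⟩, rfl⟩ := T.mkQ_surjective z
        have hx : φ x = 0 := by
          exact hz
        refine ⟨c + s ⟨x, hx⟩, ?_⟩
        have hmemT : ((c + s ⟨x, hx⟩, 0) : ↥C₁ × (Fin n → Λᵐᵒᵖ)) - (c, x) ∈ T := by
          refine ⟨⟨x, hx⟩, ?_⟩
          have h1 : s ⟨x, hx⟩ = c + s ⟨x, hx⟩ - c := by abel
          have h2 : -x = (0 : Fin n → Λᵐᵒᵖ) - x := by abel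
          exact Prod.ext h1 h2
        calc e₁.hom (c + s ⟨x, hx⟩)
            = T.mkQ (c + s ⟨x, hx⟩, 0) := rfl
          _ = T.mkQ (c, x) := by
              rw [Submodule.mkQ_apply, Submodule.mkQ_apply, Submodule.Quotient.eq]
              exact hmemT
    have hE : E ∈ C := hext e₁ e₂ (isSES_of' e₁ e₂ he₁inj he₂surj hrk') hC₁ hC₂
    -- the surjection E → Y
    let ψ₀ : (↥C₁ × (Fin n → Λᵐᵒᵖ)) →ₗ[Λᵐᵒᵖ] ↥Y :=
      ((show ↥X →ₗ[Λᵐᵒᵖ] ↥Y from f.hom).comp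
        ((show ↥C₁ →ₗ[Λᵐᵒᵖ] ↥X from q₁.hom).comp (LinearMap.fst Λᵐᵒᵖ ↥C₁ (Fin n → Λᵐᵒᵖ))))
      + hY.comp (LinearMap.snd Λᵐᵒᵖ ↥C₁ (Fin n → Λᵐᵒᵖ))
    have hψ₀ : ∀ p : ↥C₁ × (Fin n → Λᵐᵒᵖ), ψ₀ p = f (q₁ p.1) + hY p.2 := fun p => rfl
    have hψ₀T : T ≤ LinearMap.ker ψ₀ := by
      rintro _ ⟨a, rfl⟩
      simp only [LinearMap.mem_ker, LinearMap.prod_apply, Pi.prod, Function.prod_apply]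
      rw [hψ₀]
      simp only [LinearMap.neg_apply, Submodule.coe_subtype, map_neg]
      rw [hs' a, hv a]
      abel
    let ψ : E ⟶ Y := ModuleCat.ofHom (T.liftQ ψ₀ hψ₀T)
    have hψsurj : Function.Surjective ψ := by
      intro y
      obtain ⟨c₂, hc₂⟩ := hq₂s (g y)
      obtain ⟨x, hx⟩ := hφ c₂
      have hgy : g (y - hY x) = 0 := by
        rw [map_sub, hhY' x, hx, hc₂, sub_self]
      have hmem' : y - hY x ∈ LinearMap.range (show ↥X →ₗ[Λᵐᵒᵖ] ↥Y from f.hom) := by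
        rw [hrk]; exact hgy
      obtain ⟨x₀, hx₀⟩ := hmem'
      obtain ⟨c₁, hc₁⟩ := hq₁s x₀
      refine ⟨T.mkQ (c₁, x), ?_⟩
      have h1 : ψ (T.mkQ (c₁, x)) = ψ₀ (c₁, x) := rfl
      rw [h1, hψ₀]
      simp only []
      rw [hc₁, hx₀]
      abel
    exact ⟨E, hE, ψ, (ModuleCat.epi_iff_surjective ψ).mpr hψsurj⟩
  refine ⟨hfacext, ⟨hquot, hfacext⟩, hsub, ?_⟩
  rintro T ⟨hTq, _⟩ hCT M ⟨M₀, hM₀, q, hq⟩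
  exact hTq q hq (hCT hM₀)
end

section
/- Let Λ be a hereditary artin algebra and C an ICE-closed subcategory of mod Λ with enough Ext-projectives. Let P be a split projective object of C and Q a submodule of P with Q ∈ C. Then Q is also split projective in C. -/
open CategoryTheory CategoryTheory.Limits

universe u

open Paper

theorem stmt_13 (R : Type u) [CommRing R] [IsArtinianRing R]
    (Λ : Type u) [Ring Λ] [Algebra R Λ] [Module.Finite R Λ]
    (hΗ : Hereditary Λ)
    (C : Set (Modcat Λ)) (hC : IsSubcat C) (hICE : ICEClosed C)
    (henough : HasEnoughExtProjectives C)
    (P Q : Modcat Λ) (hP : SplitProjective C P)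
    (i : Q ⟶ P) (hi : Mono i) (hQ : Q ∈ C) :
    SplitProjective C Q := by
  obtain ⟨hPC, hPsplit⟩ := hP
  refine ⟨hQ, ?_⟩
  intro M hM f hf
  have hfsurj : Function.Surjective f := (ModuleCat.epi_iff_surjective f).mp hf
  have hiinj : Function.Injective i := (ModuleCat.mono_iff_injective i).mp hi
  -- a free module surjecting onto P
  let F : Modcat Λ := ModuleCat.of Λᵐᵒᵖ (P →₀ Λᵐᵒᵖ)
  let p : F ⟶ P := ModuleCat.ofHom (Finsupp.linearCombination Λᵐᵒᵖ _root_.id)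
  have hpsurj : Function.Surjective p := by
    intro x
    refine ⟨Finsupp.single x 1, ?_⟩
    show Finsupp.linearCombination Λᵐᵒᵖ _root_.id (Finsupp.single x 1) = x
    simp
  let Q' : Submodule Λᵐᵒᵖ P := LinearMap.range i.hom
  let G : Submodule Λᵐᵒᵖ F := Q'.comap p.hom
  haveI hGproj : Module.Projective Λᵐᵒᵖ G := hΗ F (inferInstance : Module.Projective Λᵐᵒᵖ (↥P →₀ Λᵐᵒᵖ)) G
  -- the map G → Q induced by p and i
  let eQ : Q ≃ₗ[Λᵐᵒᵖ] Q' := LinearEquiv.ofInjective i.hom hiinj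
  let r : G →ₗ[Λᵐᵒᵖ] Q' := LinearMap.restrict p.hom (fun x hx => hx)
  let qm : G →ₗ[Λᵐᵒᵖ] Q := eQ.symm.toLinearMap.comp r
  have hqm : ∀ g : G, i (qm g) = p g.val := by
    intro g
    have h1 : eQ (qm g) = r g := eQ.apply_symm_apply (r g)
    have h2 := congrArg Subtype.val h1
    exact h2
  -- lift G → Q through the surjection f : M → Q
  obtain ⟨h, hh⟩ := Module.projective_lifting_property f.hom qm hfsurj
  have hh' : ∀ g : G, f (h g) = qm g := fun g => congrArg (fun u => u g) hh
  -- the pushout N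
  let ℓ : G →ₗ[Λᵐᵒᵖ] F × M := (G.subtype).prod (-h)
  let L : Submodule Λᵐᵒᵖ (F × M) := LinearMap.range ℓ
  let Ncat : Modcat Λ := ModuleCat.of Λᵐᵒᵖ ((F × M) ⧸ L)
  let φ : (F × M) →ₗ[Λᵐᵒᵖ] P := LinearMap.coprod p.hom (i.hom.comp f.hom)
  have hφL : ∀ x ∈ L, φ x = 0 := by
    rintro _ ⟨g, rfl⟩
    have : φ (ℓ g) = p g.val + i (f (-(h g))) := by
      simp [φ, ℓ, LinearMap.coprod_apply]
    rw [this, map_neg, map_neg, hh' g, hqm g]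
    abel
  let πN : ((F × M) ⧸ L) →ₗ[Λᵐᵒᵖ] P := L.liftQ φ hφL
  let μ : M →ₗ[Λᵐᵒᵖ] ((F × M) ⧸ L) := L.mkQ.comp (LinearMap.inr Λᵐᵒᵖ F M)
  have hπμ : ∀ m : M, πN (μ m) = i (f m) := by
    intro m
    show πN (Submodule.Quotient.mk ((0 : F), m)) = _
    show φ ((0 : F), m) = _
    simp [φ, LinearMap.coprod_apply]
  have hμinj : Function.Injective μ := by
    have key : ∀ m : M, μ m = 0 → m = 0 := by
      intro m hm
      have hmem : ((0 : F), m) ∈ L := by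
        rwa [show μ m = Submodule.Quotient.mk ((0 : F), m) from rfl,
          Submodule.Quotient.mk_eq_zero] at hm
      obtain ⟨g, hg⟩ := hmem
      have hg1 : (g : F) = 0 := congrArg Prod.fst hg
      have hg0 : g = 0 := Subtype.ext hg1
      have hg2 : -(h g) = m := congrArg Prod.snd hg
      rw [← hg2, hg0, map_zero, neg_zero]
    intro a b hab
    have : a - b = 0 := key _ (by rw [map_sub, hab, sub_self])
    exact sub_eq_zero.mp this
  have hrange : ∀ n : ((F × M) ⧸ L), πN n ∈ Q' → n ∈ LinearMap.range μ := by
    intro n hn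
    obtain ⟨⟨x, m⟩, rfl⟩ := Submodule.Quotient.mk_surjective L n
    have hval : πN (Submodule.Quotient.mk (x, m)) = p x + i (f m) := by
      show φ (x, m) = _; simp [φ, LinearMap.coprod_apply]
    have hx : x ∈ G := by
      have h1 : p x + i (f m) ∈ Q' := hval ▸ hn
      have h2 : i (f m) ∈ Q' := ⟨f m, rfl⟩
      have : p x = (p x + i (f m)) - i (f m) := by abel
      show p x ∈ Q'
      rw [this]; exact Submodule.sub_mem _ h1 h2
    refine ⟨m + h ⟨x, hx⟩, ?_⟩
    show Submodule.Quotient.mk ((0 : F), m + h ⟨x, hx⟩) = Submodule.Quotient.mk (x, m)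
    rw [Submodule.Quotient.eq]
    exact ⟨-⟨x, hx⟩, by simp [ℓ, Prod.ext_iff]; exact (congrArg Neg.neg (map_neg h (⟨x, hx⟩ : G))).trans (neg_neg _)⟩
  -- the quotient Z = P / Q'
  let Zcat : Modcat Λ := ModuleCat.of Λᵐᵒᵖ (P ⧸ Q')
  let ν : ((F × M) ⧸ L) →ₗ[Λᵐᵒᵖ] (P ⧸ Q') := Q'.mkQ.comp πN
  let μ' : M ⟶ Ncat := ModuleCat.ofHom μ
  let ν' : Ncat ⟶ Zcat := ModuleCat.ofHom ν
  have hcomp : μ' ≫ ν' = 0 := by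
    apply ModuleCat.hom_ext
    apply LinearMap.ext
    intro m
    show Q'.mkQ (πN (μ m)) = 0
    rw [hπμ, Submodule.mkQ_apply, Submodule.Quotient.mk_eq_zero]
    exact ⟨f m, rfl⟩
  have hπNsurj : Function.Surjective πN := by
    intro y
    obtain ⟨x, hx⟩ := hpsurj y
    refine ⟨Submodule.Quotient.mk (x, 0), ?_⟩
    show φ (x, 0) = y
    simp [φ, LinearMap.coprod_apply, hx]
  have hSES : IsSES μ' ν' := by
    refine ⟨hcomp, ?_⟩
    have hex : (ShortComplex.mk μ' ν' hcomp).Exact := by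
      rw [ShortComplex.moduleCat_exact_iff]
      intro n hn
      apply hrange
      have : Q'.mkQ (πN n) = 0 := hn
      rwa [Submodule.mkQ_apply, Submodule.Quotient.mk_eq_zero] at this
    exact { exact := hex,
            mono_f := (ModuleCat.mono_iff_injective μ').mpr hμinj,
            epi_g := (ModuleCat.epi_iff_surjective ν').mpr
              ((Submodule.mkQ_surjective Q').comp hπNsurj) }
  -- Z ∈ C and N ∈ C
  have hZ : Zcat ∈ C := hC.isoClosed (ModuleCat.cokernelIsoRangeQuotient i) (hICE.2.1 i hQ hPC)
  have hN : Ncat ∈ C := hICE.2.2 μ' ν' hSES hM hZ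
  -- split projectivity of P gives a section of πN
  let πN' : Ncat ⟶ P := ModuleCat.ofHom πN
  have hπNepi : Epi πN' := (ModuleCat.epi_iff_surjective πN').mpr hπNsurj
  obtain ⟨t, ht⟩ := hPsplit Ncat hN πN' hπNepi
  have ht' : ∀ x : P, πN (t x) = x := by
    intro x
    have := congrArg (fun (g : P ⟶ P) => g x) ht
    simpa [πN'] using this
  -- construct the section of f
  have hmem : ∀ q : Q, t (i q) ∈ LinearMap.range μ := by
    intro q
    exact hrange _ (by rw [ht' (i q)]; exact ⟨q, rfl⟩)
  let eμ : M ≃ₗ[Λᵐᵒᵖ] LinearMap.range μ := LinearEquiv.ofInjective μ hμinj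
  let t' : Q →ₗ[Λᵐᵒᵖ] LinearMap.range μ :=
    LinearMap.codRestrict (LinearMap.range μ) (i ≫ t).hom hmem
  let s : Q →ₗ[Λᵐᵒᵖ] M := eμ.symm.toLinearMap.comp t'
  have hμs : ∀ q : Q, μ (s q) = t (i q) := by
    intro q
    have h1 : eμ (s q) = t' q := eμ.apply_symm_apply (t' q)
    have h2 := congrArg Subtype.val h1
    simpa [eμ, t', LinearEquiv.ofInjective_apply, LinearMap.codRestrict_apply] using h2
  refine ⟨ModuleCat.ofHom s, ?_⟩
  apply ModuleCat.hom_ext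
  apply LinearMap.ext
  intro q
  apply hiinj
  show i (f (s q)) = i ((𝟙 Q : Q ⟶ Q) q)
  rw [← hπμ, hμs, ht']
  rfl
end
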